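/- The connected component of the Kronecker product ℤ₊ ×_K ℤ containing (0,0) is graph-isomorphic to the restricted lattice L{(x,y) ∈ ℤ² : x ≥ y}, with the origin mapped to the origin. -/

import Mathlib

def SimpleGraph.kron {V₁ V₂ : Type*} (G₁ : SimpleGraph V₁) (G₂ : SimpleGraph V₂) :
    SimpleGraph (V₁ × V₂) where
  Adj p q := G₁.Adj p.1 q.1 ∧ G₂.Adj p.2 q.2
  symm := ⟨fun _ _ h => ⟨h.1.symm, h.2.symm⟩⟩
  loopless := ⟨fun p h => G₁.ne_of_adj h.1 rfl⟩

/-- The one-dimensional integer lattice: `x ∼ y` iff `|x - y| = 1`. -/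
def latZ : SimpleGraph ℤ where
  Adj x y := |x - y| = 1
  symm := by constructor; intro x y h; exact (abs_sub_comm y x).trans h
  loopless := by constructor; intro x h; simp at h

/-- The half-line graph on `ℕ = {0,1,2,...}`: `x ∼ y` iff `|x - y| = 1`. -/
def latN : SimpleGraph ℕ where
  Adj x y := |(x : ℤ) - y| = 1
  symm := by constructor; intro x y h; exact (abs_sub_comm (y : ℤ) x).trans h
  loopless := by constructor; intro x h; simp at h

/-- The connected component of `G` containing `o`, as the induced subgraph on the
set of vertices reachable from `o`. -/
def component {V : Type*} (G : SimpleGraph V) (o : V) : SimpleGraph {v // G.Reachable o v} :=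
  G.induce {v | G.Reachable o v}

private lemma absEqOne {a : ℤ} : |a| = 1 ↔ a = 1 ∨ a = -1 := by
  rw [abs_eq (by norm_num : (0:ℤ) ≤ 1)]

private lemma kron_adj_iff {u u' : ℕ} {v v' : ℤ} :
    (latN.kron latZ).Adj (u, v) (u', v') ↔ (|(u:ℤ) - u'| = 1 ∧ |v - v'| = 1) := Iff.rfl

private lemma walk_parity {p q : ℕ × ℤ} (w : (latN.kron latZ).Walk p q) :
    ((p.1 : ℤ) + p.2) % 2 = ((q.1 : ℤ) + q.2) % 2 := by
  induction w with
  | nil => rfl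
  | cons h _ ih =>
    obtain ⟨h1, h2⟩ := h
    simp only [latN, latZ] at h1 h2
    rw [absEqOne] at h1 h2
    omega

private lemma parity_of_reach {p : ℕ × ℤ} (h : (latN.kron latZ).Reachable (0, 0) p) :
    ((p.1 : ℤ) + p.2) % 2 = 0 := by
  obtain ⟨w⟩ := h
  have := walk_parity w
  simpa using this.symm

private lemma adj_ur (u : ℕ) (v : ℤ) : (latN.kron latZ).Adj (u, v) (u + 1, v + 1) := by
  rw [kron_adj_iff, absEqOne, absEqOne]; push_cast; omega

private lemma adj_dr (u : ℕ) (v : ℤ) : (latN.kron latZ).Adj (u + 1, v) (u, v + 1) := by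
  rw [kron_adj_iff, absEqOne, absEqOne]; push_cast; omega

private lemma reach_step2 (u : ℕ) (v : ℤ) :
    (latN.kron latZ).Reachable (u, v) (u, v + 2) := by
  have h1 := (adj_ur u v).reachable
  have h2 : (latN.kron latZ).Reachable (u + 1, v + 1) (u, v + 2) := by
    have := (adj_dr u (v + 1)).reachable
    simpa [add_assoc] using this
  exact h1.trans h2

private lemma reach_diag (u : ℕ) : (latN.kron latZ).Reachable (0, 0) (u, (u : ℤ)) := by
  induction u with
  | zero => exact SimpleGraph.Reachable.refl _
  | succ n ih =>
    refine ih.trans ((adj_ur n n).reachable.trans ?_)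
    push_cast
    exact SimpleGraph.Reachable.refl _

private lemma reach_of_parity (u : ℕ) (v : ℤ) (h : ((u : ℤ) + v) % 2 = 0) :
    (latN.kron latZ).Reachable (0, 0) (u, v) := by
  have key : ∀ k : ℤ, (latN.kron latZ).Reachable (0, 0) (u, (u : ℤ) + 2 * k) := by
    intro k
    induction k using Int.induction_on with
    | zero => simpa using reach_diag u
    | succ n ih =>
      have := ih.trans (reach_step2 u ((u : ℤ) + 2 * n))
      have e : (u : ℤ) + 2 * n + 2 = (u : ℤ) + 2 * (n + 1) := by ring
      rwa [e] at this
    | pred n ih =>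
      have h2 : (latN.kron latZ).Reachable (u, (u : ℤ) + 2 * (-n - 1)) (u, (u : ℤ) + 2 * (-n)) := by
        have := reach_step2 u ((u : ℤ) + 2 * (-n - 1))
        have e : (u : ℤ) + 2 * (-n - 1) + 2 = (u : ℤ) + 2 * (-n) := by ring
        rwa [e] at this
      exact (ih.trans h2.symm)
  have e : v = (u : ℤ) + 2 * ((v - u) / 2) := by omega
  rw [e]
  exact key _

private def theEquiv : {v // (latN.kron latZ).Reachable (0, 0) v} ≃
    {p : ℤ × ℤ | p.2 ≤ p.1} where
  toFun x := ⟨(((x.1.1 : ℤ) + x.1.2) / 2, (x.1.2 - (x.1.1 : ℤ)) / 2), by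
    have := parity_of_reach x.2
    simp only [Set.mem_setOf_eq]
    omega⟩
  invFun p := ⟨((p.1.1 - p.1.2).toNat, p.1.1 + p.1.2), by
    refine reach_of_parity _ _ ?_
    have hle : p.1.2 ≤ p.1.1 := p.2
    omega⟩
  left_inv := by
    rintro ⟨⟨u, v⟩, h⟩
    have := parity_of_reach h
    simp only at this
    apply Subtype.ext
    refine Prod.ext ?_ ?_ <;> simp only <;> omega
  right_inv := by
    rintro ⟨⟨x, y⟩, h⟩
    have hle : y ≤ x := h
    apply Subtype.ext
    refine Prod.ext ?_ ?_ <;> simp only <;> omega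

private lemma theEquiv_rel {a b : {v // (latN.kron latZ).Reachable (0, 0) v}} :
    ((latZ □ latZ).induce {p : ℤ × ℤ | p.2 ≤ p.1}).Adj (theEquiv a) (theEquiv b) ↔
      (component (latN.kron latZ) (0, 0)).Adj a b := by
  obtain ⟨⟨u, v⟩, h⟩ := a
  obtain ⟨⟨u', v'⟩, h'⟩ := b
  have hp := parity_of_reach h
  have hp' := parity_of_reach h'
  simp only at hp hp'
  show (latZ □ latZ).Adj (((u : ℤ) + v) / 2, (v - (u : ℤ)) / 2)
      (((u' : ℤ) + v') / 2, (v' - (u' : ℤ)) / 2) ↔ (latN.kron latZ).Adj (u, v) (u', v')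
  rw [SimpleGraph.boxProd_adj, kron_adj_iff]
  show ((|((u : ℤ) + v) / 2 - ((u' : ℤ) + v') / 2| = 1 ∧ (v - (u : ℤ)) / 2 = (v' - (u' : ℤ)) / 2) ∨
      (|(v - (u : ℤ)) / 2 - (v' - (u' : ℤ)) / 2| = 1 ∧ ((u : ℤ) + v) / 2 = ((u' : ℤ) + v') / 2)) ↔ _
  rw [absEqOne, absEqOne, absEqOne, absEqOne]
  constructor
  · rintro (⟨h1, h2⟩ | ⟨h1, h2⟩) <;> constructor <;> omega
  · rintro ⟨h1 | h1, h2 | h2⟩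
    · left; constructor <;> omega
    · right; constructor <;> omega
    · right; constructor <;> omega
    · left; constructor <;> omega

theorem component_kronNZ_iso_xgey :
    ∃ φ : component (latN.kron latZ) (0, 0) ≃g
        (latZ □ latZ).induce {p : ℤ × ℤ | p.2 ≤ p.1},
      φ ⟨(0, 0), SimpleGraph.Reachable.refl _⟩ = ⟨(0, 0), by simp⟩ := by
  exact ⟨⟨theEquiv, theEquiv_rel⟩, rfl⟩
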